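/- Fix n ≥ 2, 2 ≤ r ≤ n, 1 ≤ K < n, p ∈ (0,1). The probability that the subgraph of H∩G(n;K,p) restricted to vertices {1,...,r} is connected is at most r^{r−2}·(p·λ_n(K))^{r−1}. -/

import Mathlib

open scoped Classical
open Finset

noncomputable def ind (P : Prop) : ℝ := if P then 1 else 0

lemma ind_nonneg (P : Prop) : 0 ≤ ind P := by
  unfold ind; split <;> norm_num

lemma ind_and (P Q : Prop) : ind (P ∧ Q) = ind P * ind Q := by
  unfold ind; by_cases hP : P <;> by_cases hQ : Q <;> simp [hP, hQ]

lemma ind_le_one (P : Prop) : ind P ≤ 1 := by unfold ind; split <;> norm_num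

/-- Averaging over one coordinate of a piFinset sum. -/
lemma sum_update_eq {α β : Type*} [Fintype α] [DecidableEq α] [DecidableEq β]
    (D : α → Finset β) (i : α) (f : (α → β) → ℝ) :
    ∑ γ ∈ Fintype.piFinset D, ∑ x ∈ D i, f (Function.update γ i x)
      = (D i).card * ∑ γ ∈ Fintype.piFinset D, f γ := by
  have key : ∑ q ∈ (Fintype.piFinset D) ×ˢ (D i), f (Function.update q.1 i q.2)
      = ∑ q ∈ (Fintype.piFinset D) ×ˢ (D i), f q.1 := by
    apply Finset.sum_nbij' (i := fun q => (Function.update q.1 i q.2, q.1 i))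
      (j := fun q => (Function.update q.1 i q.2, q.1 i))
    · rintro ⟨γ, x⟩ hq
      simp only [mem_product, Fintype.mem_piFinset] at hq ⊢
      refine ⟨fun a => ?_, by simpa using hq.1 i⟩
      by_cases ha : a = i
      · subst ha; simpa using hq.2
      · rw [Function.update_of_ne ha]; exact hq.1 a
    · rintro ⟨γ, x⟩ hq
      simp only [mem_product, Fintype.mem_piFinset] at hq ⊢
      refine ⟨fun a => ?_, by simpa using hq.1 i⟩
      by_cases ha : a = i
      · subst ha; simpa using hq.2
      · rw [Function.update_of_ne ha]; exact hq.1 a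
    · rintro ⟨γ, x⟩ hq
      refine Prod.ext (funext fun a => ?_) (by simp)
      by_cases ha : a = i
      · subst ha; simp
      · simp [Function.update_of_ne ha]
    · rintro ⟨γ, x⟩ hq
      refine Prod.ext (funext fun a => ?_) (by simp)
      by_cases ha : a = i
      · subst ha; simp
      · simp [Function.update_of_ne ha]
    · rintro ⟨γ, x⟩ hq
      simp
  simp only [Finset.sum_product] at key
  rw [key]
  simp [Finset.sum_const, nsmul_eq_mul, Finset.mul_sum]

/-- Conditional comparison over one coordinate. -/
lemma sum_le_of_update {α β : Type*} [Fintype α] [DecidableEq α] [DecidableEq β]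
    (D : α → Finset β) (i : α) (f g : (α → β) → ℝ) (c : ℝ)
    (hcard : 0 < (D i).card)
    (h : ∀ γ ∈ Fintype.piFinset D,
      ∑ x ∈ D i, f (Function.update γ i x) ≤ c * ∑ x ∈ D i, g (Function.update γ i x)) :
    ∑ γ ∈ Fintype.piFinset D, f γ ≤ c * ∑ γ ∈ Fintype.piFinset D, g γ := by
  have h1 := sum_update_eq D i f
  have h2 := sum_update_eq D i g
  have h3 : ∑ γ ∈ Fintype.piFinset D, ∑ x ∈ D i, f (Function.update γ i x)
      ≤ ∑ γ ∈ Fintype.piFinset D, (c * ∑ x ∈ D i, g (Function.update γ i x)) :=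
    Finset.sum_le_sum h
  rw [h1] at h3
  rw [← Finset.mul_sum, h2] at h3
  have hc : (0:ℝ) < ((D i).card : ℝ) := by exact_mod_cast hcard
  have h4 : ((D i).card : ℝ) * ∑ γ ∈ Fintype.piFinset D, f γ
      ≤ ((D i).card : ℝ) * (c * ∑ γ ∈ Fintype.piFinset D, g γ) := by
    calc ((D i).card : ℝ) * ∑ γ ∈ Fintype.piFinset D, f γ
        ≤ c * (((D i).card : ℝ) * ∑ γ ∈ Fintype.piFinset D, g γ) := h3
      _ = ((D i).card : ℝ) * (c * ∑ γ ∈ Fintype.piFinset D, g γ) := by ring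
  exact (mul_le_mul_iff_right₀ hc).1 h4

/-- Number of K-subsets of `U` containing `B`. -/
noncomputable def Scount {V : Type*} [DecidableEq V] (U : Finset V) (K : ℕ) (B : Finset V) : ℕ :=
  ((Finset.powersetCard K U).filter (fun y => B ⊆ y)).card

lemma Scount_empty {V : Type*} [DecidableEq V] (U : Finset V) (K : ℕ) :
    Scount U K ∅ = U.card.choose K := by
  unfold Scount
  rw [Finset.filter_true_of_mem (fun y _ => Finset.empty_subset y), Finset.card_powersetCard]

lemma sum_ind_subset {V : Type*} [DecidableEq V] (U : Finset V) (K : ℕ) (B : Finset V) :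
    ∑ y ∈ Finset.powersetCard K U, ind (B ⊆ y) = (Scount U K B : ℝ) := by
  unfold ind Scount
  convert Finset.sum_boole (fun y => B ⊆ y) (Finset.powersetCard K U) (R := ℝ) using 2
  congr 1

lemma swap_mem_filter_aux {V : Type*} [DecidableEq V] (U : Finset V) (K : ℕ) (B : Finset V)
    (a t : V) (ha : a ∈ U) (ht : t ∈ U) (haB : a ∉ B) (htB : t ∉ B)
    (y : Finset V) (hy : y ∈ (Finset.powersetCard K U).filter (fun y => insert a B ⊆ y)) :
    y.image (Equiv.swap a t) ∈ (Finset.powersetCard K U).filter (fun y => insert t B ⊆ y) := by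
  simp only [Finset.mem_filter, Finset.mem_powersetCard] at hy ⊢
  obtain ⟨⟨hyU, hyc⟩, hsub⟩ := hy
  refine ⟨⟨?_, ?_⟩, ?_⟩
  · intro x hx
    simp only [Finset.mem_image] at hx
    obtain ⟨z, hz, rfl⟩ := hx
    by_cases h1 : z = a
    · rw [h1, Equiv.swap_apply_left]; exact ht
    · by_cases h2 : z = t
      · rw [h2, Equiv.swap_apply_right]; exact ha
      · rw [Equiv.swap_apply_of_ne_of_ne h1 h2]; exact hyU hz
  · rw [Finset.card_image_of_injective _ (Equiv.swap a t).injective]; exact hyc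
  · intro x hx
    simp only [Finset.mem_insert] at hx
    rcases hx with rfl | hx
    · refine Finset.mem_image.2 ⟨a, hsub (Finset.mem_insert_self a B), Equiv.swap_apply_left a x⟩
    · refine Finset.mem_image.2 ⟨x, hsub (Finset.mem_insert_of_mem hx), ?_⟩
      exact Equiv.swap_apply_of_ne_of_ne (fun h => haB (h ▸ hx)) (fun h => htB (h ▸ hx))

lemma Scount_swap {V : Type*} [DecidableEq V] (U : Finset V) (K : ℕ) (B : Finset V)
    (a t : V) (ha : a ∈ U) (ht : t ∈ U) (haB : a ∉ B) (htB : t ∉ B) :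
    Scount U K (insert a B) = Scount U K (insert t B) := by
  classical
  unfold Scount
  refine Finset.card_bij' (i := fun y _ => y.image (Equiv.swap a t))
    (j := fun y _ => y.image (Equiv.swap a t))
    (fun y hy => swap_mem_filter_aux U K B a t ha ht haB htB y hy)
    (fun y hy => by
      have := swap_mem_filter_aux U K B t a ht ha htB haB y hy
      rwa [Equiv.swap_comm] at this) ?_ ?_
  · intro y hy
    show Finset.image (Equiv.swap a t) (Finset.image (Equiv.swap a t) _) = _
    rw [Finset.image_image]
    have : (Equiv.swap a t : V → V) ∘ (Equiv.swap a t) = id := by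
      funext z; simp
    rw [this, Finset.image_id]
  · intro y hy
    show Finset.image (Equiv.swap a t) (Finset.image (Equiv.swap a t) _) = _
    rw [Finset.image_image]
    have : (Equiv.swap a t : V → V) ∘ (Equiv.swap a t) = id := by
      funext z; simp
    rw [this, Finset.image_id]

lemma Scount_mono {V : Type*} [DecidableEq V] (U : Finset V) (K : ℕ) {B B' : Finset V}
    (h : B ⊆ B') : Scount U K B' ≤ Scount U K B := by
  unfold Scount
  apply Finset.card_le_card
  intro y hy
  simp only [Finset.mem_filter] at hy ⊢
  exact ⟨hy.1, h.trans hy.2⟩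

lemma Scount_eq_zero {V : Type*} [DecidableEq V] (U : Finset V) (K : ℕ) (B : Finset V)
    (h : K < B.card) : Scount U K B = 0 := by
  unfold Scount
  rw [Finset.card_eq_zero, Finset.filter_eq_empty_iff]
  intro y hy hsub
  rw [Finset.mem_powersetCard] at hy
  exact absurd (Finset.card_le_card hsub) (by omega)

/-- Double counting: `(|U| - |B|) * |{y ⊇ insert a B}| = (K - |B|) * |{y ⊇ B}|`. -/
lemma Scount_insert_identity {V : Type*} [DecidableEq V] (U : Finset V) (K : ℕ) (B : Finset V)
    (hB : B ⊆ U) (a : V) (ha : a ∈ U) (haB : a ∉ B) :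
    (U.card - B.card) * Scount U K (insert a B) = (K - B.card) * Scount U K B := by
  classical
  have hcongr : ∀ y ∈ (Finset.powersetCard K U).filter (fun y => B ⊆ y),
      (y \ B).card = K - B.card := by
    intro y hy
    simp only [Finset.mem_filter, Finset.mem_powersetCard] at hy
    rw [Finset.card_sdiff_of_subset hy.2, hy.1.2]
  have key : ∑ y ∈ (Finset.powersetCard K U).filter (fun y => B ⊆ y), (y \ B).card
      = (K - B.card) * Scount U K B := by
    rw [Finset.sum_congr rfl hcongr, Finset.sum_const, smul_eq_mul]
    unfold Scount
    ring
  have step : ∀ y ∈ (Finset.powersetCard K U).filter (fun y => B ⊆ y),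
      ((y \ B).card : ℕ) = ∑ t ∈ U \ B, if t ∈ y then 1 else 0 := by
    intro y hy
    simp only [Finset.mem_filter, Finset.mem_powersetCard] at hy
    rw [← Finset.card_filter]
    congr 1
    ext z
    simp only [Finset.mem_sdiff, Finset.mem_filter]
    constructor
    · rintro ⟨hz, hzB⟩; exact ⟨⟨hy.1.1 hz, hzB⟩, hz⟩
    · rintro ⟨⟨_, hzB⟩, hz⟩; exact ⟨hz, hzB⟩
  have key2 : ∑ y ∈ (Finset.powersetCard K U).filter (fun y => B ⊆ y), (y \ B).card
      = ∑ t ∈ U \ B, Scount U K (insert t B) := by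
    rw [Finset.sum_congr rfl step, Finset.sum_comm]
    apply Finset.sum_congr rfl
    intro t ht
    rw [← Finset.card_filter]
    simp only [Finset.mem_sdiff] at ht
    unfold Scount
    rw [Finset.filter_filter]
    congr 1
    apply Finset.filter_congr
    intro y hy
    simp only [Finset.insert_subset_iff]
    tauto
  have key3 : ∑ t ∈ U \ B, Scount U K (insert t B)
      = (U.card - B.card) * Scount U K (insert a B) := by
    rw [Finset.sum_congr rfl (fun t ht => ?_), Finset.sum_const, smul_eq_mul,
      Finset.card_sdiff_of_subset hB]
    simp only [Finset.mem_sdiff] at ht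
    exact Scount_swap U K B t a ht.1 ha ht.2 haB
  omega

lemma Scount_insert_le {V : Type*} [DecidableEq V] (U : Finset V) (K : ℕ) (B : Finset V)
    (hB : B ⊆ U) (v : V) (hv : v ∈ U) (hvB : v ∉ B) :
    U.card * Scount U K (insert v B) ≤ K * Scount U K B := by
  have hid := Scount_insert_identity U K B hB v hv hvB
  have hmono : Scount U K (insert v B) ≤ Scount U K B :=
    Scount_mono U K (Finset.subset_insert v B)
  have hBU : B.card ≤ U.card := Finset.card_le_card hB
  by_cases hm : B.card ≤ K
  · calc U.card * Scount U K (insert v B)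
        = ((U.card - B.card) + B.card) * Scount U K (insert v B) := by
          rw [Nat.sub_add_cancel hBU]
      _ = (U.card - B.card) * Scount U K (insert v B)
            + B.card * Scount U K (insert v B) := by ring
      _ = (K - B.card) * Scount U K B + B.card * Scount U K (insert v B) := by rw [hid]
      _ ≤ (K - B.card) * Scount U K B + B.card * Scount U K B :=
          Nat.add_le_add_left (Nat.mul_le_mul_left _ hmono) _
      _ = ((K - B.card) + B.card) * Scount U K B := by ring
      _ = K * Scount U K B := by rw [Nat.sub_add_cancel hm]
  · rw [Scount_eq_zero U K (insert v B) (by rw [Finset.card_insert_of_notMem hvB]; omega)]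
    omega

lemma ind_congr {P Q : Prop} (h : P ↔ Q) : ind P = ind Q := by
  unfold ind; simp only [h]

lemma prod_ind_mem {V : Type*} [DecidableEq V] (s y : Finset V) :
    ∏ u ∈ s, ind (u ∈ y) = ind (s ⊆ y) := by
  classical
  induction s using Finset.induction_on with
  | empty => simp [ind]
  | insert a s ha ih =>
    rw [Finset.prod_insert ha, ih, ← ind_and]
    exact ind_congr (by rw [Finset.insert_subset_iff])

lemma exists_leaf {V : Type*} [DecidableEq V] (g : V → V) (A : Finset V) (hA : A.Nonempty)
    (hesc : ∀ u ∈ A, ∃ k, g^[k] u ∉ A) :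
    ∃ v ∈ A, ∀ u ∈ A, u ≠ v → g u ≠ v := by
  classical
  obtain ⟨v, hvA, hmax⟩ := Finset.exists_max_image A
    (fun u => if hu : u ∈ A then Nat.find (hesc u hu) else 0) hA
  refine ⟨v, hvA, fun u hu hne hgu => ?_⟩
  have hfu : g^[Nat.find (hesc u hu)] u ∉ A := Nat.find_spec (hesc u hu)
  have h1 : 1 ≤ Nat.find (hesc u hu) := by
    rcases Nat.eq_zero_or_pos (Nat.find (hesc u hu)) with h | h
    · rw [h] at hfu; simp at hfu; exact absurd hu hfu
    · exact h
  have hiter : g^[Nat.find (hesc u hu) - 1] v ∉ A := by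
    have : g^[(Nat.find (hesc u hu) - 1) + 1] u = g^[Nat.find (hesc u hu) - 1] (g u) :=
      Function.iterate_succ_apply g _ u
    rw [hgu] at this
    rw [← this]
    have : (Nat.find (hesc u hu) - 1) + 1 = Nat.find (hesc u hu) := by omega
    rw [this]
    exact hfu
  have hle : Nat.find (hesc v hvA) ≤ Nat.find (hesc u hu) - 1 := Nat.find_le hiter
  have hmax' := hmax u hu
  simp only [dif_pos hu, dif_pos hvA] at hmax'
  omega

def pairE (n : ℕ) (γ : Fin n → Finset (Fin n)) (a b : Fin n) : Prop :=
  b ∈ γ a ∨ a ∈ γ b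

noncomputable def Gam (n K : ℕ) : Finset (Fin n → Finset (Fin n)) :=
  Fintype.piFinset (fun i => Finset.powersetCard K (Finset.univ.erase i))

lemma card_univ_erase {n : ℕ} (i : Fin n) : (Finset.univ.erase i).card = n - 1 := by
  rw [Finset.card_erase_of_mem (Finset.mem_univ i), Finset.card_univ, Fintype.card_fin]

lemma card_D {n K : ℕ} (i : Fin n) :
    (Finset.powersetCard K (Finset.univ.erase i)).card = (n - 1).choose K := by
  rw [Finset.card_powersetCard, card_univ_erase]

lemma gamma_bound (n K : ℕ) (hn : 2 ≤ n) (hKn : K ≤ n - 1)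
    (g : Fin n → Fin n) (A : Finset (Fin n))
    (hg : ∀ u ∈ A, g u ≠ u) (hesc : ∀ u ∈ A, ∃ k, g^[k] u ∉ A) :
    ∑ γ ∈ Gam n K, ∏ u ∈ A, ind (pairE n γ u (g u))
      ≤ (2 * (K : ℝ) / ((n : ℝ) - 1) - ((K : ℝ) / ((n : ℝ) - 1)) ^ 2) ^ A.card
          * ((Gam n K).card : ℝ) := by
  classical
  set lam : ℝ := 2 * (K : ℝ) / ((n : ℝ) - 1) - ((K : ℝ) / ((n : ℝ) - 1)) ^ 2 with hlam
  set ρ : ℝ := (K : ℝ) / ((n : ℝ) - 1) with hρ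
  have hNpos : (0 : ℝ) < (n : ℝ) - 1 := by
    have : (2 : ℝ) ≤ (n : ℝ) := by exact_mod_cast hn
    linarith
  have hρ0 : 0 ≤ ρ := div_nonneg (Nat.cast_nonneg K) hNpos.le
  have hρ1 : ρ ≤ 1 := by
    rw [hρ, div_le_one hNpos]
    have : (K : ℝ) ≤ ((n - 1 : ℕ) : ℝ) := by exact_mod_cast hKn
    have h2 : ((n - 1 : ℕ) : ℝ) = (n : ℝ) - 1 := by
      have : 1 ≤ n := by omega
      push_cast [this]; ring
    linarith [h2 ▸ this]
  have hlam_eq : lam = ρ + (1 - ρ) * ρ := by rw [hlam, hρ]; ring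
  have hlam0 : 0 ≤ lam := by rw [hlam_eq]; nlinarith
  set D := (fun i : Fin n => Finset.powersetCard K (Finset.univ.erase i)) with hD
  have hGam : Gam n K = Fintype.piFinset D := rfl
  set κ := (n - 1).choose K with hκ
  have hκpos : 0 < κ := Nat.choose_pos hKn
  have hκR : (0 : ℝ) < (κ : ℝ) := by exact_mod_cast hκpos
  have hDcard : ∀ i, (D i).card = κ := fun i => card_D i
  -- strong induction on the cardinality of A
  suffices H : ∀ m (A : Finset (Fin n)), A.card = m →
      (∀ u ∈ A, g u ≠ u) → (∀ u ∈ A, ∃ k, g^[k] u ∉ A) →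
      ∑ γ ∈ Fintype.piFinset D, ∏ u ∈ A, ind (pairE n γ u (g u))
        ≤ lam ^ A.card * ((Fintype.piFinset D).card : ℝ) by
    rw [hGam]
    exact H A.card A rfl hg hesc
  intro m
  induction m using Nat.strong_induction_on with
  | _ m ih =>
  intro A hcard hg hesc
  rcases A.eq_empty_or_nonempty with rfl | hA
  · simp
  -- pick a leaf v
  obtain ⟨v, hvA, hleaf⟩ := exists_leaf g A hA hesc
  set w := g v with hw
  have hwv : w ≠ v := hg v hvA
  set U := A.erase v with hU
  have hUA : U ⊆ A := Finset.erase_subset v A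
  have hvU : v ∉ U := Finset.notMem_erase v A
  set F' := fun γ : Fin n → Finset (Fin n) => ∏ u ∈ U, ind (pairE n γ u (g u)) with hF'
  have hF'nonneg : ∀ γ, 0 ≤ F' γ := fun γ => Finset.prod_nonneg (fun u _ => ind_nonneg _)
  set c1 := Scount (Finset.univ.erase v) K {w} with hc1
  -- Step V : integrate out coordinate v
  have stepV : (κ : ℝ) * ∑ γ ∈ Fintype.piFinset D, ∏ u ∈ A, ind (pairE n γ u (g u))
      = ∑ γ ∈ Fintype.piFinset D, F' γ * (if v ∈ γ w then (κ : ℝ) else (c1 : ℝ)) := by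
    have hSV := sum_update_eq D v (fun γ => ∏ u ∈ A, ind (pairE n γ u (g u)))
    rw [hDcard v] at hSV
    rw [← hSV]
    apply Finset.sum_congr rfl
    intro γ _
    have hsplit : ∀ x, ∏ u ∈ A, ind (pairE n (Function.update γ v x) u (g u))
        = ind (pairE n (Function.update γ v x) v w) * F' γ := by
      intro x
      rw [← Finset.mul_prod_erase A _ hvA, ← hU]
      congr 1
      apply Finset.prod_congr rfl
      intro u hu
      have hu1 : u ≠ v := Finset.ne_of_mem_erase hu
      have hu2 : g u ≠ v := hleaf u (hUA hu) hu1
      unfold pairE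
      rw [Function.update_of_ne hu1, Function.update_of_ne hu2]
    have hpair : ∀ x, pairE n (Function.update γ v x) v w ↔ (w ∈ x ∨ v ∈ γ w) := by
      intro x
      unfold pairE
      rw [Function.update_self, Function.update_of_ne hwv]
    rw [Finset.sum_congr rfl (fun x _ => hsplit x)]
    rw [← Finset.sum_mul, mul_comm (∑ x ∈ D v, ind (pairE n (Function.update γ v x) v w)) (F' γ)]
    congr 1
    rw [Finset.sum_congr rfl (fun x _ => ind_congr (hpair x))]
    by_cases hvw : v ∈ γ w
    · rw [Finset.sum_congr rfl (fun x _ => ind_congr (iff_true_intro (Or.inr hvw)))]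
      simp only [ind, if_pos trivial]
      rw [Finset.sum_const, hDcard v, nsmul_eq_mul, mul_one, if_pos hvw]
    · rw [if_neg hvw]
      rw [Finset.sum_congr rfl (fun x _ => ind_congr
        ((or_iff_left hvw).trans (Finset.singleton_subset_iff (a := w)).symm))]
      exact sum_ind_subset _ K {w}
  -- the count identity for c1
  have hwev : w ∈ Finset.univ.erase v := Finset.mem_erase.2 ⟨hwv, Finset.mem_univ w⟩
  have hc1id : (n - 1) * c1 = K * κ := by
    have := Scount_insert_identity (Finset.univ.erase v) K ∅ (Finset.empty_subset _) w hwev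
      (Finset.notMem_empty w)
    simpa [card_univ_erase, Scount_empty, hκ, hc1] using this
  have hc1R : (c1 : ℝ) = ρ * κ := by
    have hcast : ((n - 1 : ℕ) : ℝ) = (n : ℝ) - 1 := by
      have h1 : 1 ≤ n := by omega
      push_cast [h1]; ring
    have : ((n - 1 : ℕ) : ℝ) * (c1 : ℝ) = (K : ℝ) * (κ : ℝ) := by exact_mod_cast hc1id
    rw [hcast] at this
    rw [hρ]
    field_simp
    linarith [this]
  have hc1le : c1 ≤ κ := by
    have := Scount_mono (Finset.univ.erase v) K (Finset.empty_subset {w})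
    rwa [Scount_empty, card_univ_erase] at this
  -- Step W : the conditional hypergeometric bound
  have stepW : ∑ γ ∈ Fintype.piFinset D, F' γ * ind (v ∈ γ w)
      ≤ ρ * ∑ γ ∈ Fintype.piFinset D, F' γ := by
    apply sum_le_of_update D w _ _ ρ (by rw [hDcard w]; exact hκpos)
    intro γ _
    -- factorize F' (update γ w y)
    set s1 := U.filter (fun u => u = w) with hs1
    set s' := U.filter (fun u => ¬u = w) with hs'
    set s2 := s'.filter (fun u => g u = w) with hs2
    set s3 := s'.filter (fun u => ¬g u = w) with hs3
    set sat := s2.filter (fun u => w ∈ γ u) with hsat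
    set B2 := s2.filter (fun u => ¬w ∈ γ u) with hB2
    set cγ := ∏ u ∈ s3, ind (pairE n γ u (g u)) with hcγ
    have hcγ0 : 0 ≤ cγ := Finset.prod_nonneg (fun u _ => ind_nonneg _)
    set Bγ := if w ∈ U ∧ ¬w ∈ γ (g w) then insert (g w) B2 else B2 with hBγ
    have hP1 : ∀ y, F' (Function.update γ w y) = ind (Bγ ⊆ y) * cγ := by
      intro y
      show (∏ u ∈ U, ind (pairE n (Function.update γ w y) u (g u))) = ind (Bγ ⊆ y) * cγ
      rw [← Finset.prod_filter_mul_prod_filter_not U (fun u => u = w)]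
      rw [← Finset.prod_filter_mul_prod_filter_not (U.filter (fun u => ¬u = w)) (fun u => g u = w)]
      rw [← Finset.prod_filter_mul_prod_filter_not (Finset.filter (fun u => g u = w) (U.filter (fun u => ¬u = w))) (fun u => w ∈ γ u)]
      have e3 : ∏ u ∈ s3, ind (pairE n (Function.update γ w y) u (g u)) = cγ := by
        apply Finset.prod_congr rfl
        intro u hu
        simp only [hs3, hs', Finset.mem_filter] at hu
        unfold pairE
        rw [Function.update_of_ne hu.1.2, Function.update_of_ne hu.2]
      have esat : ∏ u ∈ sat, ind (pairE n (Function.update γ w y) u (g u)) = 1 := by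
        apply Finset.prod_eq_one
        intro u hu
        simp only [hsat, hs2, hs', Finset.mem_filter] at hu
        unfold pairE ind
        rw [if_pos]
        left
        rw [Function.update_of_ne hu.1.1.2, hu.1.2]
        exact hu.2
      have eB2 : ∏ u ∈ B2, ind (pairE n (Function.update γ w y) u (g u)) = ind (B2 ⊆ y) := by
        rw [← prod_ind_mem B2 y]
        apply Finset.prod_congr rfl
        intro u hu
        simp only [hB2, hs2, hs', Finset.mem_filter] at hu
        apply ind_congr
        unfold pairE
        rw [Function.update_of_ne hu.1.1.2, hu.1.2, Function.update_self]
        constructor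
        · rintro (h | h)
          · exact absurd h hu.2
          · exact h
        · exact Or.inr
      have e1 : ∏ u ∈ s1, ind (pairE n (Function.update γ w y) u (g u))
          = (if w ∈ U ∧ ¬w ∈ γ (g w) then ind (g w ∈ y) else 1) := by
        rw [hs1, Finset.filter_eq']
        by_cases hwU : w ∈ U
        · rw [if_pos hwU, Finset.prod_singleton]
          have hgw : g w ≠ w := hg w (hUA hwU)
          unfold pairE
          rw [Function.update_self, Function.update_of_ne hgw]
          by_cases hmem : w ∈ γ (g w)
          · rw [if_neg (by simp [hwU, hmem])]
            unfold ind
            rw [if_pos (Or.inr hmem)]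
          · rw [if_pos ⟨hwU, hmem⟩]
            apply ind_congr
            constructor
            · rintro (h | h)
              · exact h
              · exact absurd h hmem
            · exact Or.inl
        · rw [if_neg hwU, Finset.prod_empty, if_neg (by simp [hwU])]
      -- combine
      show (∏ u ∈ s1, ind (pairE n (Function.update γ w y) u (g u))) *
          ((∏ u ∈ sat, ind (pairE n (Function.update γ w y) u (g u))) *
            (∏ u ∈ B2, ind (pairE n (Function.update γ w y) u (g u))) *
           ∏ u ∈ s3, ind (pairE n (Function.update γ w y) u (g u))) = ind (Bγ ⊆ y) * cγ
      rw [e1, esat, eB2, e3, one_mul, hBγ]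
      by_cases hcase : w ∈ U ∧ ¬w ∈ γ (g w)
      · rw [if_pos hcase, if_pos hcase]
        rw [← mul_assoc, ← ind_and]
        congr 1
        exact ind_congr (by rw [Finset.insert_subset_iff])
      · rw [if_neg hcase, if_neg hcase, one_mul]
    -- conditions for the counting inequality
    have hgwU : w ∈ U → g w ≠ w := fun hwU => hg w (hUA hwU)
    have hBsub : Bγ ⊆ Finset.univ.erase w := by
      rw [hBγ]
      intro b hb
      rw [Finset.mem_erase]
      refine ⟨?_, Finset.mem_univ b⟩
      by_cases hcase : w ∈ U ∧ ¬w ∈ γ (g w)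
      · rw [if_pos hcase] at hb
        rcases Finset.mem_insert.1 hb with rfl | hb
        · exact hgwU hcase.1
        · simp only [hB2, hs2, hs', Finset.mem_filter] at hb
          exact hb.1.1.2
      · rw [if_neg hcase] at hb
        simp only [hB2, hs2, hs', Finset.mem_filter] at hb
        exact hb.1.1.2
    have hvBγ : v ∉ Bγ := by
      rw [hBγ]
      intro hb
      have hvB2 : v ∉ B2 := by
        simp only [hB2, hs2, hs', Finset.mem_filter]
        rintro ⟨⟨⟨hvU', _⟩, _⟩, _⟩
        exact hvU hvU'
      by_cases hcase : w ∈ U ∧ ¬w ∈ γ (g w)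
      · rw [if_pos hcase] at hb
        rcases Finset.mem_insert.1 hb with heq | hb
        · exact hleaf w (hUA hcase.1) (Finset.ne_of_mem_erase hcase.1) heq.symm
        · exact hvB2 hb
      · rw [if_neg hcase] at hb
        exact hvB2 hb
    have hvew : v ∈ Finset.univ.erase w := Finset.mem_erase.2 ⟨fun h => hwv h.symm, Finset.mem_univ v⟩
    have hcount := Scount_insert_le (Finset.univ.erase w) K Bγ hBsub v hvew hvBγ
    rw [card_univ_erase] at hcount
    have hcast : ((n - 1 : ℕ) : ℝ) = (n : ℝ) - 1 := by
      have h1 : 1 ≤ n := by omega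
      push_cast [h1]; ring
    have hcountR : ((n : ℝ) - 1) * (Scount (Finset.univ.erase w) K (insert v Bγ) : ℝ)
        ≤ (K : ℝ) * (Scount (Finset.univ.erase w) K Bγ : ℝ) := by
      rw [← hcast]; exact_mod_cast hcount
    -- now compute both sums
    have hLHS : ∀ y ∈ D w,
        F' (Function.update γ w y) * ind (v ∈ Function.update γ w y w)
          = cγ * ind (insert v Bγ ⊆ y) := by
      intro y hy
      rw [Function.update_self, hP1 y]
      rw [mul_comm (ind (Bγ ⊆ y)) cγ, mul_assoc, ← ind_and]
      congr 1
      apply ind_congr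
      rw [Finset.insert_subset_iff]
      tauto
    have hRHS : ∀ y ∈ D w, F' (Function.update γ w y) = cγ * ind (Bγ ⊆ y) := by
      intro y hy
      rw [hP1 y]; ring
    rw [Finset.sum_congr rfl hLHS, Finset.sum_congr rfl hRHS]
    rw [← Finset.mul_sum, ← Finset.mul_sum]
    have hDw : D w = Finset.powersetCard K (Finset.univ.erase w) := rfl
    rw [hDw, sum_ind_subset, sum_ind_subset]
    rw [mul_comm ρ _, mul_assoc]
    apply mul_le_mul_of_nonneg_left ?_ hcγ0
    have h2 : (Scount (Finset.univ.erase w) K (insert v Bγ) : ℝ)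
        ≤ (K : ℝ) * (Scount (Finset.univ.erase w) K Bγ : ℝ) / ((n : ℝ) - 1) := by
      rw [le_div_iff₀ hNpos]
      linarith [hcountR]
    calc (Scount (Finset.univ.erase w) K (insert v Bγ) : ℝ)
        ≤ (K : ℝ) * (Scount (Finset.univ.erase w) K Bγ : ℝ) / ((n : ℝ) - 1) := h2
      _ = (Scount (Finset.univ.erase w) K Bγ : ℝ) * ρ := by rw [hρ]; ring
  -- final assembly
  have hsplitIte : ∀ γ : Fin n → Finset (Fin n),
      (if v ∈ γ w then (κ : ℝ) else (c1 : ℝ)) = c1 + ((κ : ℝ) - c1) * ind (v ∈ γ w) := by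
    intro γ; unfold ind; by_cases h : v ∈ γ w <;> simp [h]
  have stepV2 : (κ : ℝ) * ∑ γ ∈ Fintype.piFinset D, ∏ u ∈ A, ind (pairE n γ u (g u))
      = (c1 : ℝ) * ∑ γ ∈ Fintype.piFinset D, F' γ
        + ((κ : ℝ) - c1) * ∑ γ ∈ Fintype.piFinset D, F' γ * ind (v ∈ γ w) := by
    rw [stepV]
    rw [Finset.mul_sum, Finset.mul_sum, ← Finset.sum_add_distrib]
    apply Finset.sum_congr rfl
    intro γ _
    rw [hsplitIte γ]; ring
  have hκc1R : (0 : ℝ) ≤ (κ : ℝ) - (c1 : ℝ) := by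
    have : (c1 : ℝ) ≤ (κ : ℝ) := by exact_mod_cast hc1le
    linarith
  have hSU0 : 0 ≤ ∑ γ ∈ Fintype.piFinset D, F' γ :=
    Finset.sum_nonneg (fun γ _ => hF'nonneg γ)
  have hm1 : 1 ≤ m := by
    rw [← hcard]
    exact Finset.card_pos.2 hA
  have hUcard : U.card = m - 1 := by
    rw [hU, Finset.card_erase_of_mem hvA, hcard]
  have hihU := ih (m - 1) (by omega) U hUcard
    (fun u hu => hg u (hUA hu))
    (fun u hu => (hesc u (hUA hu)).imp (fun k hk hk' => hk (hUA hk')))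
  rw [hUcard] at hihU
  -- chain of inequalities
  have hchain : (κ : ℝ) * ∑ γ ∈ Fintype.piFinset D, ∏ u ∈ A, ind (pairE n γ u (g u))
      ≤ (κ : ℝ) * (lam * ∑ γ ∈ Fintype.piFinset D, F' γ) := by
    rw [stepV2]
    have step1 : ((κ : ℝ) - c1) * ∑ γ ∈ Fintype.piFinset D, F' γ * ind (v ∈ γ w)
        ≤ ((κ : ℝ) - c1) * (ρ * ∑ γ ∈ Fintype.piFinset D, F' γ) :=
      mul_le_mul_of_nonneg_left stepW hκc1R
    have : (c1 : ℝ) * ∑ γ ∈ Fintype.piFinset D, F' γ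
          + ((κ : ℝ) - c1) * (ρ * ∑ γ ∈ Fintype.piFinset D, F' γ)
        = (κ : ℝ) * (lam * ∑ γ ∈ Fintype.piFinset D, F' γ) := by
      rw [hc1R, hlam_eq]; ring
    linarith [step1]
  have hAc : ∑ γ ∈ Fintype.piFinset D, ∏ u ∈ A, ind (pairE n γ u (g u))
      ≤ lam * ∑ γ ∈ Fintype.piFinset D, F' γ := (mul_le_mul_iff_right₀ hκR).1 hchain
  have hfinal : lam * ∑ γ ∈ Fintype.piFinset D, F' γ
      ≤ lam * (lam ^ (m - 1) * ((Fintype.piFinset D).card : ℝ)) :=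
    mul_le_mul_of_nonneg_left hihU hlam0
  calc ∑ γ ∈ Fintype.piFinset D, ∏ u ∈ A, ind (pairE n γ u (g u))
      ≤ lam * (lam ^ (m - 1) * ((Fintype.piFinset D).card : ℝ)) := le_trans hAc hfinal
    _ = lam ^ A.card * ((Fintype.piFinset D).card : ℝ) := by
        rw [hcard]
        have hmm : m - 1 + 1 = m := by omega
        have hh : lam * (lam ^ (m - 1) * ((Fintype.piFinset D).card : ℝ))
            = lam ^ (m - 1 + 1) * ((Fintype.piFinset D).card : ℝ) := by
          rw [pow_succ]; ring
        rw [hh, hmm]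

section Pars

variable {r : ℕ} [NeZero r]

/-- Acyclic parent functions rooted at `0`: these encode spanning trees. -/
noncomputable def Pars (r : ℕ) [NeZero r] : Finset (Fin r → Fin r) :=
  Finset.univ.filter (fun f => f 0 = 0 ∧ (∀ v : Fin r, v ≠ 0 → f v ≠ v) ∧ ∀ v, ∃ k, f^[k] v = 0)

noncomputable def leaves (par : Fin r → Fin r) (R : Finset (Fin r)) : Finset (Fin r) :=
  Finset.univ.filter (fun v => v ≠ 0 ∧ v ∉ R ∧ ∀ u, u ∉ R → par u ≠ v)

noncomputable def pick (par : Fin r → Fin r) (R : Finset (Fin r)) : Fin r :=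
  if h : (leaves par R).Nonempty then (leaves par R).min' h else 0

noncomputable def Rset (par : Fin r → Fin r) : ℕ → Finset (Fin r)
  | 0 => ∅
  | i + 1 => insert (pick par (Rset par i)) (Rset par i)

variable {par : Fin r → Fin r} (h0 : par 0 = 0)
  (hne : ∀ v : Fin r, v ≠ 0 → par v ≠ v) (hac : ∀ v, ∃ k, par^[k] v = 0)

include h0 hac in
lemma leaves_nonempty (R : Finset (Fin r)) (hex : ∃ v : Fin r, v ∉ R ∧ v ≠ 0) :
    (leaves par R).Nonempty := by
  classical
  set A := Finset.univ.filter (fun v : Fin r => v ∉ R ∧ v ≠ 0) with hA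
  have hAne : A.Nonempty := by
    obtain ⟨v, hv⟩ := hex
    exact ⟨v, by simp [hA, hv.1, hv.2]⟩
  obtain ⟨v, hvA, hmax⟩ := Finset.exists_max_image A (fun v => Nat.find (hac v)) hAne
  simp only [hA, Finset.mem_filter] at hvA
  refine ⟨v, ?_⟩
  unfold leaves
  simp only [Finset.mem_filter, Finset.mem_univ, true_and]
  refine ⟨hvA.2.2, hvA.2.1, fun u huR hpu => ?_⟩
  have hu0 : u ≠ 0 := by
    intro h; rw [h, h0] at hpu; exact hvA.2.2 hpu.symm
  have huA : u ∈ A := by simp [hA, huR, hu0]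
  have hfu : par^[Nat.find (hac u)] u = 0 := Nat.find_spec (hac u)
  have h1 : 1 ≤ Nat.find (hac u) := by
    rcases Nat.eq_zero_or_pos (Nat.find (hac u)) with h | h
    · rw [h] at hfu; simp at hfu; exact absurd hfu hu0
    · exact h
  have hiter : par^[Nat.find (hac u) - 1] v = 0 := by
    have e1 : (Nat.find (hac u) - 1) + 1 = Nat.find (hac u) := by omega
    have e2 : par^[(Nat.find (hac u) - 1) + 1] u = par^[Nat.find (hac u) - 1] (par u) :=
      Function.iterate_succ_apply par _ u
    rw [e1, hpu] at e2
    rw [← e2]; exact hfu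
  have hle : Nat.find (hac v) ≤ Nat.find (hac u) - 1 := Nat.find_le hiter
  have := hmax u huA
  omega

lemma Rset_mono {i j : ℕ} (hij : i ≤ j) : Rset par i ⊆ Rset par j := by
  induction j with
  | zero => rw [Nat.le_zero.1 hij]
  | succ j ihj =>
    rcases Nat.lt_or_ge i (j+1) with h | h
    · exact (ihj (by omega)).trans (Finset.subset_insert _ _)
    · have : i = j + 1 := by omega
      rw [this]

include h0 hac in
lemma Rset_good (hr2 : 2 ≤ r) : ∀ i, i ≤ r - 1 →
    (Rset par i).card = i ∧ (0 : Fin r) ∉ Rset par i := by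
  intro i
  induction i with
  | zero => intro _; simp [Rset]
  | succ i ihi =>
    intro hi
    obtain ⟨hcard, h0R⟩ := ihi (by omega)
    have hex : ∃ v : Fin r, v ∉ Rset par i ∧ v ≠ 0 := by
      have hcc : (insert (0 : Fin r) (Rset par i)).card < (Finset.univ : Finset (Fin r)).card := by
        have := Finset.card_insert_le (0 : Fin r) (Rset par i)
        rw [Finset.card_univ, Fintype.card_fin]
        omega
      obtain ⟨v, _, hv⟩ : ∃ e ∈ (Finset.univ : Finset (Fin r)), e ∉ insert (0 : Fin r) (Rset par i) := by
        by_contra hcon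
        push_neg at hcon
        exact absurd (Finset.card_le_card hcon) (by omega)
      simp only [Finset.mem_insert, not_or] at hv
      exact ⟨v, hv.2, hv.1⟩
    have hne' : (leaves par (Rset par i)).Nonempty := leaves_nonempty h0 hac _ hex
    have hpick : pick par (Rset par i) ∈ leaves par (Rset par i) := by
      unfold pick
      rw [dif_pos hne']
      exact Finset.min'_mem _ _
    unfold leaves at hpick
    simp only [Finset.mem_filter, Finset.mem_univ, true_and] at hpick
    constructor
    · show (insert (pick par (Rset par i)) (Rset par i)).card = i + 1
      rw [Finset.card_insert_of_notMem hpick.2.1, hcard]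
    · show (0 : Fin r) ∉ insert (pick par (Rset par i)) (Rset par i)
      simp only [Finset.mem_insert, not_or]
      exact ⟨fun h => hpick.1 h.symm, h0R⟩

include h0 hac in
lemma pick_mem_leaves (hr2 : 2 ≤ r) {i : ℕ} (hi : i ≤ r - 2) :
    pick par (Rset par i) ∈ leaves par (Rset par i) := by
  have hgood := Rset_good h0 hac hr2 i (by omega)
  have hex : ∃ v : Fin r, v ∉ Rset par i ∧ v ≠ 0 := by
    have hcc : (insert (0 : Fin r) (Rset par i)).card < (Finset.univ : Finset (Fin r)).card := by
      have := Finset.card_insert_le (0 : Fin r) (Rset par i)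
      rw [Finset.card_univ, Fintype.card_fin]
      omega
    obtain ⟨v, _, hv⟩ : ∃ e ∈ (Finset.univ : Finset (Fin r)), e ∉ insert (0 : Fin r) (Rset par i) := by
      by_contra hcon
      push_neg at hcon
      exact absurd (Finset.card_le_card hcon) (by omega)
    simp only [Finset.mem_insert, not_or] at hv
    exact ⟨v, hv.2, hv.1⟩
  have hne' := leaves_nonempty h0 hac (R := Rset par i) hex
  unfold pick
  rw [dif_pos hne']
  exact Finset.min'_mem _ _

include h0 hac in
lemma Rset_closed (hr2 : 2 ≤ r) : ∀ i, i ≤ r - 1 →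
    ∀ u, u ∉ Rset par i → u ≠ 0 → par u ∉ Rset par i := by
  intro i
  induction i with
  | zero => intro _ u _ _; simp [Rset]
  | succ i ihi =>
    intro hi u hu hu0
    show par u ∉ insert (pick par (Rset par i)) (Rset par i)
    have hu' : u ∉ Rset par i := fun h => hu (Finset.mem_insert_of_mem h)
    have hpick := pick_mem_leaves h0 hac hr2 (i := i) (by omega)
    unfold leaves at hpick
    simp only [Finset.mem_filter, Finset.mem_univ, true_and] at hpick
    simp only [Finset.mem_insert, not_or]
    exact ⟨hpick.2.2 u hu', ihi (by omega) u hu' hu0⟩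

include h0 hne hac in
lemma par_unremoved (hr2 : 2 ≤ r) (v : Fin r) (hv : v ∉ Rset par (r - 2)) (hv0 : v ≠ 0) :
    par v = 0 := by
  classical
  by_contra hpv0
  have hcardR : (Rset par (r - 2)).card = r - 2 := (Rset_good h0 hac hr2 (r - 2) (by omega)).1
  have hC : (Finset.univ \ Rset par (r - 2)).card = 2 := by
    rw [Finset.card_sdiff_of_subset (Finset.subset_univ _), Finset.card_univ, Fintype.card_fin, hcardR]
    omega
  have h0C : (0 : Fin r) ∈ Finset.univ \ Rset par (r - 2) := by
    simp only [Finset.mem_sdiff, Finset.mem_univ, true_and]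
    exact (Rset_good h0 hac hr2 (r - 2) (by omega)).2
  have hvC : v ∈ Finset.univ \ Rset par (r - 2) := by
    simp [hv]
  have hpvC : par v ∈ Finset.univ \ Rset par (r - 2) := by
    simp only [Finset.mem_sdiff, Finset.mem_univ, true_and]
    exact Rset_closed h0 hac hr2 (r - 2) (by omega) v hv hv0
  have hsub : ({0, v, par v} : Finset (Fin r)) ⊆ Finset.univ \ Rset par (r - 2) := by
    intro x hx
    simp only [Finset.mem_insert, Finset.mem_singleton] at hx
    rcases hx with rfl | rfl | rfl
    · exact h0C
    · exact hvC
    · exact hpvC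
  have hc3 : ({0, v, par v} : Finset (Fin r)).card = 3 := by
    rw [Finset.card_insert_of_notMem, Finset.card_insert_of_notMem, Finset.card_singleton]
    · simp only [Finset.mem_singleton]
      exact fun h => (hne v hv0) h.symm
    · simp only [Finset.mem_insert, Finset.mem_singleton, not_or]
      exact ⟨fun h => hv0 h.symm, fun h => hpv0 h.symm⟩
  have := Finset.card_le_card hsub
  omega

lemma mem_Rset_exists : ∀ j, ∀ v ∈ Rset par j,
    ∃ i, i < j ∧ v ∉ Rset par i ∧ v = pick par (Rset par i) := by
  intro j
  induction j with
  | zero => intro v hv; simp [Rset] at hv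
  | succ j ihj =>
    intro v hv
    rcases Finset.mem_insert.1 hv with h | h
    · by_cases hvj : v ∈ Rset par j
      · obtain ⟨i, hi, h1, h2⟩ := ihj v hvj
        exact ⟨i, by omega, h1, h2⟩
      · exact ⟨j, by omega, hvj, h⟩
    · obtain ⟨i, hi, h1, h2⟩ := ihj v h
      exact ⟨i, by omega, h1, h2⟩

include h0 hne hac in
lemma leaves_char (hr2 : 2 ≤ r) {i : ℕ} (hi : i ≤ r - 2) :
    leaves par (Rset par i) = Finset.univ.filter (fun v => v ≠ 0 ∧ v ∉ Rset par i ∧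
      ∀ j, i ≤ j → j < r - 2 → par (pick par (Rset par j)) ≠ v) := by
  classical
  ext v
  unfold leaves
  simp only [Finset.mem_filter, Finset.mem_univ, true_and]
  constructor
  · rintro ⟨hv0, hvR, hprop⟩
    refine ⟨hv0, hvR, fun j hij hj hpj => ?_⟩
    have hpickj := pick_mem_leaves h0 hac hr2 (i := j) (by omega)
    unfold leaves at hpickj
    simp only [Finset.mem_filter, Finset.mem_univ, true_and] at hpickj
    have : pick par (Rset par j) ∉ Rset par i :=
      fun h => hpickj.2.1 (Rset_mono hij h)
    exact hprop _ this hpj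
  · rintro ⟨hv0, hvR, hcode⟩
    refine ⟨hv0, hvR, fun u huR hpu => ?_⟩
    have hu0 : u ≠ 0 := by
      intro h; rw [h, h0] at hpu; exact hv0 hpu.symm
    by_cases hu2 : u ∈ Rset par (r - 2)
    · obtain ⟨j, hj, hujR, hupick⟩ := mem_Rset_exists (r - 2) u hu2
      have hij : i ≤ j := by
        by_contra hij
        push_neg at hij
        have hmem : u ∈ Rset par (j + 1) := by
          show u ∈ insert (pick par (Rset par j)) (Rset par j)
          rw [← hupick]
          exact Finset.mem_insert_self _ _
        exact huR (Rset_mono (by omega) hmem)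
      refine hcode j hij hj ?_
      rw [← hupick]
      exact hpu
    · have := par_unremoved h0 hne hac hr2 u hu2 hu0
      rw [this] at hpu
      exact hv0 hpu.symm

include h0 hne hac in
lemma leaves_eq_of_code {par' : Fin r → Fin r} (h0' : par' 0 = 0)
    (hne' : ∀ v : Fin r, v ≠ 0 → par' v ≠ v) (hac' : ∀ v, ∃ k, par'^[k] v = 0)
    (hr2 : 2 ≤ r)
    (hcode : ∀ j, j < r - 2 → par (pick par (Rset par j)) = par' (pick par' (Rset par' j)))
    {i : ℕ} (hi : i ≤ r - 2) (hRs : Rset par i = Rset par' i) :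
    leaves par (Rset par i) = leaves par' (Rset par' i) := by
  rw [leaves_char h0 hne hac hr2 hi, leaves_char h0' hne' hac' hr2 hi, hRs]
  apply Finset.filter_congr
  intro v _
  constructor
  · rintro ⟨a, b, c⟩
    exact ⟨a, b, fun j hij hj => (hcode j hj) ▸ c j hij hj⟩
  · rintro ⟨a, b, c⟩
    exact ⟨a, b, fun j hij hj => (hcode j hj).symm ▸ c j hij hj⟩

include h0 hne hac in
lemma Rset_eq_of_code {par' : Fin r → Fin r} (h0' : par' 0 = 0)
    (hne' : ∀ v : Fin r, v ≠ 0 → par' v ≠ v) (hac' : ∀ v, ∃ k, par'^[k] v = 0)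
    (hr2 : 2 ≤ r)
    (hcode : ∀ j, j < r - 2 → par (pick par (Rset par j)) = par' (pick par' (Rset par' j))) :
    ∀ i, i ≤ r - 2 → Rset par i = Rset par' i := by
  intro i
  induction i with
  | zero => intro _; rfl
  | succ i ihi =>
    intro hi
    have hRs := ihi (by omega)
    have hlv := leaves_eq_of_code h0 hne hac h0' hne' hac' hr2 hcode (i := i) (by omega) hRs
    show insert (pick par (Rset par i)) (Rset par i)
        = insert (pick par' (Rset par' i)) (Rset par' i)
    have hpick : pick par (Rset par i) = pick par' (Rset par' i) := by
      unfold pick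
      rw [hlv]
    rw [hpick, hRs]

include h0 hne hac in
lemma pick_eq_of_code {par' : Fin r → Fin r} (h0' : par' 0 = 0)
    (hne' : ∀ v : Fin r, v ≠ 0 → par' v ≠ v) (hac' : ∀ v, ∃ k, par'^[k] v = 0)
    (hr2 : 2 ≤ r)
    (hcode : ∀ j, j < r - 2 → par (pick par (Rset par j)) = par' (pick par' (Rset par' j)))
    {i : ℕ} (hi : i ≤ r - 2) :
    pick par (Rset par i) = pick par' (Rset par' i) := by
  have hRs := Rset_eq_of_code h0 hne hac h0' hne' hac' hr2 hcode i hi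
  have hlv := leaves_eq_of_code h0 hne hac h0' hne' hac' hr2 hcode hi hRs
  unfold pick
  rw [hlv]

include h0 hne hac in
lemma par_eq_of_code {par' : Fin r → Fin r} (h0' : par' 0 = 0)
    (hne' : ∀ v : Fin r, v ≠ 0 → par' v ≠ v) (hac' : ∀ v, ∃ k, par'^[k] v = 0)
    (hr2 : 2 ≤ r)
    (hcode : ∀ j, j < r - 2 → par (pick par (Rset par j)) = par' (pick par' (Rset par' j))) :
    par = par' := by
  funext v
  by_cases hv0 : v = 0
  · rw [hv0, h0, h0']
  by_cases hvR : v ∈ Rset par (r - 2)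
  · obtain ⟨j, hj, hvj, hvpick⟩ := mem_Rset_exists (r - 2) v hvR
    have h1 : par v = par (pick par (Rset par j)) := by rw [← hvpick]
    have h2 : v = pick par' (Rset par' j) := by
      rw [hvpick]
      exact pick_eq_of_code h0 hne hac h0' hne' hac' hr2 hcode (by omega)
    rw [h1, hcode j hj, ← h2]
  · have hvR' : v ∉ Rset par' (r - 2) := by
      rw [← Rset_eq_of_code h0 hne hac h0' hne' hac' hr2 hcode (r - 2) le_rfl]
      exact hvR
    rw [par_unremoved h0 hne hac hr2 v hvR hv0,
      par_unremoved h0' hne' hac' hr2 v hvR' hv0]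

end Pars

lemma Pars_card_le (r : ℕ) [NeZero r] (hr2 : 2 ≤ r) :
    (Pars r).card ≤ r ^ (r - 2) := by
  classical
  have h := Finset.card_le_card_of_injOn
    (f := fun par => (fun j : Fin (r - 2) => par (pick par (Rset par j.val))))
    (s := Pars r) (t := Finset.univ)
    (fun par _ => Finset.mem_univ _) ?_
  · rwa [Finset.card_univ, Fintype.card_fun, Fintype.card_fin, Fintype.card_fin] at h
  · intro par hpar par' hpar' hf
    simp only [Finset.mem_coe, Pars, Finset.mem_filter] at hpar hpar'
    exact par_eq_of_code hpar.2.1 hpar.2.2.1 hpar.2.2.2 hpar'.2.1 hpar'.2.2.1 hpar'.2.2.2 hr2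
      (fun j hj => congrFun hf ⟨j, hj⟩)


lemma exists_par_of_connected {r : ℕ} [NeZero r] {G : SimpleGraph (Fin r)}
    (hG : G.Connected) :
    ∃ par ∈ Pars r, ∀ v : Fin r, v ≠ 0 → G.Adj v (par v) := by
  classical
  have hstep : ∀ v : Fin r, v ≠ 0 → ∃ u, G.Adj v u ∧ G.dist u 0 < G.dist v 0 := by
    intro v hv
    have hreach : G.Reachable v 0 := hG.preconnected v 0
    obtain ⟨p, hp⟩ := hreach.exists_walk_length_eq_dist
    cases p with
    | nil => exact absurd rfl hv
    | cons h q =>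
      rename_i u
      refine ⟨u, h, ?_⟩
      have h1 : G.dist u 0 ≤ q.length := SimpleGraph.dist_le q
      have h2 : (SimpleGraph.Walk.cons h q).length = q.length + 1 :=
        SimpleGraph.Walk.length_cons h q
      omega
  choose f hf1 hf2 using hstep
  set par := fun v : Fin r => if h : v = (0 : Fin r) then (0 : Fin r) else f v h with hpar
  have h0 : par 0 = 0 := by simp [hpar]
  have hadj : ∀ v : Fin r, v ≠ 0 → G.Adj v (par v) := by
    intro v hv
    rw [hpar]
    simp only [dif_neg hv]
    exact hf1 v hv
  have hne : ∀ v : Fin r, v ≠ 0 → par v ≠ v := fun v hv => (hadj v hv).ne'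
  have hac : ∀ v, ∃ k, par^[k] v = 0 := by
    suffices H : ∀ d, ∀ v : Fin r, G.dist v 0 = d → ∃ k, par^[k] v = 0 by
      intro v; exact H (G.dist v 0) v rfl
    intro d
    induction d using Nat.strong_induction_on with
    | _ d ihd =>
    intro v hd
    by_cases hv : v = 0
    · exact ⟨0, hv⟩
    · have hlt : G.dist (par v) 0 < d := by
        rw [← hd, hpar]
        simp only [dif_neg hv]
        exact hf2 v hv
      obtain ⟨k, hk⟩ := ihd (G.dist (par v) 0) hlt (par v) rfl
      refine ⟨k + 1, ?_⟩
      rw [Function.iterate_succ_apply]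
      exact hk
  refine ⟨par, ?_, hadj⟩
  unfold Pars
  rw [Finset.mem_filter]
  exact ⟨Finset.mem_univ _, h0, hne, hac⟩

lemma beta_sum (n : ℕ) (p : ℝ) (Es : Finset (Sym2 (Fin n))) :
    ∑ β : Sym2 (Fin n) → Bool,
      (∏ e : Sym2 (Fin n), if β e then p else 1 - p) * ∏ e ∈ Es, ind (β e = true)
      = p ^ Es.card := by
  classical
  have h1 : ∀ β : Sym2 (Fin n) → Bool,
      (∏ e : Sym2 (Fin n), if β e then p else 1 - p) * ∏ e ∈ Es, ind (β e = true)
      = ∏ e : Sym2 (Fin n),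
          ((if β e then p else 1 - p) * (if e ∈ Es then ind (β e = true) else 1)) := by
    intro β
    rw [Finset.prod_mul_distrib]
    congr 1
    rw [Finset.prod_ite_mem Finset.univ Es (fun e => ind (β e = true)), Finset.univ_inter]
  rw [Finset.sum_congr rfl (fun β _ => h1 β)]
  have h2 : (Finset.univ : Finset (Sym2 (Fin n) → Bool))
      = Fintype.piFinset (fun _ : Sym2 (Fin n) => (Finset.univ : Finset Bool)) :=
    Fintype.piFinset_univ.symm
  rw [h2, ← Finset.prod_univ_sum (fun _ : Sym2 (Fin n) => (Finset.univ : Finset Bool))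
    (fun e b => (if b = true then p else 1 - p) * (if e ∈ Es then ind (b = true) else 1))]
  have h3 : ∀ e : Sym2 (Fin n),
      (∑ b ∈ (Finset.univ : Finset Bool),
        ((if b then p else 1 - p) * (if e ∈ Es then ind (b = true) else 1)))
      = (if e ∈ Es then p else 1) := by
    intro e
    rw [Fintype.sum_bool]
    by_cases he : e ∈ Es <;> simp [he, ind] <;> ring
  rw [Finset.prod_congr rfl (fun e _ => h3 e)]
  rw [Finset.prod_ite_mem Finset.univ Es (fun _ => p), Finset.univ_inter, Finset.prod_const]

/-- The set of admissible pairing assignments: each node `i` is assigned a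
`K`-element subset of the other nodes. -/
noncomputable def validGammas (n K : ℕ) : Finset (Fin n → Finset (Fin n)) :=
  Finset.univ.filter (fun γ => ∀ i, γ i ∈ Finset.powersetCard K (Finset.univ.erase i))

/-- Probability of an event in `H ∩ G(n; K, p)`. -/
noncomputable def probHG (n K : ℕ) (p : ℝ)
    (E : (Fin n → Finset (Fin n)) → (Sym2 (Fin n) → Bool) → Prop) : ℝ :=
  (∑ γ ∈ validGammas n K, ∑ β : Sym2 (Fin n) → Bool,
      (∏ e : Sym2 (Fin n), if β e then p else 1 - p) * (if E γ β then 1 else 0))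
    / ((validGammas n K).card : ℝ)

/-- Adjacency in `H ∩ G(n; K, p)`. -/
def adjHG (n : ℕ) (γ : Fin n → Finset (Fin n)) (β : Sym2 (Fin n) → Bool)
    (i j : Fin n) : Prop :=
  (j ∈ γ i ∨ i ∈ γ j) ∧ β s(i, j) = true

lemma adjHG_symm {n : ℕ} {γ : Fin n → Finset (Fin n)} {β : Sym2 (Fin n) → Bool}
    {i j : Fin n} (h : adjHG n γ β i j) : adjHG n γ β j i := by
  obtain ⟨h1, h2⟩ := h
  refine ⟨h1.symm, ?_⟩
  rw [Sym2.eq_swap]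
  exact h2

lemma validGammas_eq (n K : ℕ) : validGammas n K = Gam n K := by
  unfold validGammas Gam
  ext γ
  simp only [Finset.mem_filter, Finset.mem_univ, true_and, Fintype.mem_piFinset]

lemma ite_eq_ind (P : Prop) [Decidable P] : (if P then (1:ℝ) else 0) = ind P := by
  unfold ind
  by_cases h : P
  · rw [if_pos h, if_pos h]
  · rw [if_neg h, if_neg h]

theorem restricted_connected_prob_bound (n r K : ℕ) (p : ℝ) (hn : 2 ≤ n)
    (hr2 : 2 ≤ r) (hrn : r ≤ n) (hK1 : 1 ≤ K) (hKn : K < n)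
    (hp : p ∈ Set.Ioo (0:ℝ) 1) :
    probHG n K p (fun γ β =>
        (SimpleGraph.fromRel (fun i j : Fin r =>
          adjHG n γ β (Fin.castLE hrn i) (Fin.castLE hrn j))).Connected)
      ≤ (r : ℝ) ^ (r - 2)
        * (p * (2 * (K : ℝ) / ((n : ℝ) - 1) - ((K : ℝ) / ((n : ℝ) - 1)) ^ 2)) ^ (r - 1) := by
  classical
  haveI : NeZero r := ⟨by omega⟩
  obtain ⟨hp0, hp1⟩ := hp
  set lam : ℝ := 2 * (K : ℝ) / ((n : ℝ) - 1) - ((K : ℝ) / ((n : ℝ) - 1)) ^ 2 with hlam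
  have hKn' : K ≤ n - 1 := by omega
  have hNpos : (0 : ℝ) < (n : ℝ) - 1 := by
    have : (2 : ℝ) ≤ (n : ℝ) := by exact_mod_cast hn
    linarith
  have hρ0 : (0 : ℝ) ≤ (K : ℝ) / ((n : ℝ) - 1) := div_nonneg (Nat.cast_nonneg K) hNpos.le
  have hρ1 : (K : ℝ) / ((n : ℝ) - 1) ≤ 1 := by
    rw [div_le_one hNpos]
    have h1 : (K : ℝ) ≤ ((n - 1 : ℕ) : ℝ) := by exact_mod_cast hKn'
    have h2 : ((n - 1 : ℕ) : ℝ) = (n : ℝ) - 1 := by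
      have : 1 ≤ n := by omega
      push_cast [this]; ring
    rw [h2] at h1
    linarith
  have hlam0 : 0 ≤ lam := by
    rw [hlam]
    have h3 := mul_nonneg hρ0 (by linarith : (0:ℝ) ≤ 2 - (K:ℝ)/((n:ℝ)-1))
    have h4 : 2*(K:ℝ)/((n:ℝ)-1) = 2*((K:ℝ)/((n:ℝ)-1)) := by ring
    nlinarith [h3, h4]
  set c : Fin r → Fin n := Fin.castLE hrn with hc
  have hcinj : Function.Injective c := Fin.castLE_injective hrn
  have hΓpos : 0 < (Gam n K).card := by
    rw [Gam, Fintype.card_piFinset]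
    apply Finset.prod_pos
    intro i _
    rw [card_D]
    exact Nat.choose_pos hKn'
  have hΓR : (0 : ℝ) < ((Gam n K).card : ℝ) := by exact_mod_cast hΓpos
  have hWnonneg : ∀ β : Sym2 (Fin n) → Bool,
      0 ≤ ∏ e : Sym2 (Fin n), if β e then p else 1 - p := by
    intro β
    apply Finset.prod_nonneg
    intro e _
    split <;> linarith
  -- pointwise union bound
  have hub : ∀ (γ : Fin n → Finset (Fin n)) (β : Sym2 (Fin n) → Bool),
      ind ((SimpleGraph.fromRel (fun i j : Fin r =>
          adjHG n γ β (c i) (c j))).Connected)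
      ≤ ∑ par ∈ Pars r, ∏ v ∈ Finset.univ.erase (0 : Fin r),
          ind (adjHG n γ β (c v) (c (par v))) := by
    intro γ β
    by_cases hconn : (SimpleGraph.fromRel (fun i j : Fin r =>
        adjHG n γ β (c i) (c j))).Connected
    · obtain ⟨par, hparmem, hadj⟩ := exists_par_of_connected hconn
      have hterm : ∏ v ∈ Finset.univ.erase (0 : Fin r),
          ind (adjHG n γ β (c v) (c (par v))) = 1 := by
        apply Finset.prod_eq_one
        intro v hv
        have hv0 : v ≠ 0 := Finset.ne_of_mem_erase hv
        have := hadj v hv0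
        rw [SimpleGraph.fromRel_adj] at this
        rcases this.2 with h | h
        · exact if_pos h
        · exact if_pos (adjHG_symm h)
      have h1 : ind ((SimpleGraph.fromRel (fun i j : Fin r =>
          adjHG n γ β (c i) (c j))).Connected) = 1 := if_pos hconn
      rw [h1, ← hterm]
      exact Finset.single_le_sum
        (f := fun par => ∏ v ∈ Finset.univ.erase (0 : Fin r),
          ind (adjHG n γ β (c v) (c (par v))))
        (fun par _ => Finset.prod_nonneg (fun v _ => ind_nonneg _)) hparmem
    · have h1 : ind ((SimpleGraph.fromRel (fun i j : Fin r =>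
          adjHG n γ β (c i) (c j))).Connected) = 0 := if_neg hconn
      rw [h1]
      exact Finset.sum_nonneg (fun par _ =>
        Finset.prod_nonneg (fun v _ => ind_nonneg _))
  -- per-par bound
  have hparb : ∀ par ∈ Pars r,
      ∑ γ ∈ Gam n K, ∑ β : Sym2 (Fin n) → Bool,
        (∏ e : Sym2 (Fin n), if β e then p else 1 - p)
          * ∏ v ∈ Finset.univ.erase (0 : Fin r), ind (adjHG n γ β (c v) (c (par v)))
      ≤ p ^ (r - 1) * (lam ^ (r - 1) * ((Gam n K).card : ℝ)) := by
    intro par hpar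
    rw [Pars, Finset.mem_filter] at hpar
    obtain ⟨-, h0, hne, hac⟩ := hpar
    -- edge injectivity
    have hedgeinj : ∀ v ∈ Finset.univ.erase (0 : Fin r), ∀ u ∈ Finset.univ.erase (0 : Fin r),
        s(c v, c (par v)) = s(c u, c (par u)) → v = u := by
      intro v hv u hu heq
      have hv0 : v ≠ 0 := Finset.ne_of_mem_erase hv
      have hu0 : u ≠ 0 := Finset.ne_of_mem_erase hu
      rw [Sym2.eq_iff] at heq
      rcases heq with ⟨h1, _⟩ | ⟨h1, h2⟩
      · exact hcinj h1
      · exfalso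
        have hvpu : v = par u := hcinj h1
        have hpvu : par v = u := hcinj h2
        have hcyc : ∀ k, par^[k] u = u ∨ par^[k] u = v := by
          intro k
          induction k with
          | zero => exact Or.inl rfl
          | succ k ihk =>
            rw [Function.iterate_succ_apply']
            rcases ihk with h | h
            · rw [h, ← hvpu]; exact Or.inr rfl
            · rw [h, hpvu]; exact Or.inl rfl
        obtain ⟨k, hk⟩ := hac u
        rcases hcyc k with h | h
        · exact hu0 (h ▸ hk)
        · exact hv0 (h ▸ hk)
    set Es : Finset (Sym2 (Fin n)) :=
      (Finset.univ.erase (0 : Fin r)).image (fun v => s(c v, c (par v))) with hEs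
    have hEscard : Es.card = r - 1 := by
      rw [hEs, Finset.card_image_of_injOn (fun v hv u hu => hedgeinj v hv u hu),
        Finset.card_erase_of_mem (Finset.mem_univ _), Finset.card_univ, Fintype.card_fin]
    -- split the adjacency indicator
    have hsplit : ∀ γ (β : Sym2 (Fin n) → Bool),
        ∏ v ∈ Finset.univ.erase (0 : Fin r), ind (adjHG n γ β (c v) (c (par v)))
        = (∏ v ∈ Finset.univ.erase (0 : Fin r), ind (pairE n γ (c v) (c (par v))))
          * ∏ e ∈ Es, ind (β e = true) := by
      intro γ β
      rw [hEs, Finset.prod_image (fun v hv u hu => hedgeinj v hv u hu)]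
      rw [← Finset.prod_mul_distrib]
      apply Finset.prod_congr rfl
      intro v _
      rw [← ind_and]
      rfl
    -- β integration
    have hβint : ∀ γ,
        ∑ β : Sym2 (Fin n) → Bool,
          (∏ e : Sym2 (Fin n), if β e then p else 1 - p)
            * ∏ v ∈ Finset.univ.erase (0 : Fin r), ind (adjHG n γ β (c v) (c (par v)))
        = (∏ v ∈ Finset.univ.erase (0 : Fin r), ind (pairE n γ (c v) (c (par v))))
            * p ^ (r - 1) := by
      intro γ
      calc ∑ β : Sym2 (Fin n) → Bool,
            (∏ e : Sym2 (Fin n), if β e then p else 1 - p)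
              * ∏ v ∈ Finset.univ.erase (0 : Fin r), ind (adjHG n γ β (c v) (c (par v)))
          = ∑ β : Sym2 (Fin n) → Bool,
            (∏ v ∈ Finset.univ.erase (0 : Fin r), ind (pairE n γ (c v) (c (par v))))
              * ((∏ e : Sym2 (Fin n), if β e then p else 1 - p)
                * ∏ e ∈ Es, ind (β e = true)) := by
            apply Finset.sum_congr rfl
            intro β _
            rw [hsplit γ β]; ring
        _ = (∏ v ∈ Finset.univ.erase (0 : Fin r), ind (pairE n γ (c v) (c (par v))))
              * ∑ β : Sym2 (Fin n) → Bool,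
                (∏ e : Sym2 (Fin n), if β e then p else 1 - p)
                  * ∏ e ∈ Es, ind (β e = true) := by
            rw [Finset.mul_sum]
        _ = (∏ v ∈ Finset.univ.erase (0 : Fin r), ind (pairE n γ (c v) (c (par v))))
              * p ^ (r - 1) := by
            rw [beta_sum n p Es, hEscard]
    -- γ integration via the spanning-structure bound
    set A : Finset (Fin n) := (Finset.univ.erase (0 : Fin r)).image c with hA
    set gext : Fin n → Fin n :=
      fun x => if h : (x : ℕ) < r then c (par ⟨(x : ℕ), h⟩) else x with hgext
    have hgc : ∀ v : Fin r, gext (c v) = c (par v) := by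
      intro v
      have hlt : ((c v : Fin n) : ℕ) < r := by
        rw [hc, Fin.coe_castLE]
        exact v.isLt
      have hstep : gext (c v) = c (par ⟨((c v : Fin n) : ℕ), hlt⟩) := dif_pos hlt
      have hvv : (⟨((c v : Fin n) : ℕ), hlt⟩ : Fin r) = v := by
        apply Fin.ext
        show ((c v : Fin n) : ℕ) = (v : ℕ)
        rw [hc, Fin.coe_castLE]
      rw [hstep, hvv]
    have hiter : ∀ (k : ℕ) (v : Fin r), gext^[k] (c v) = c (par^[k] v) := by
      intro k
      induction k with
      | zero => intro v; rfl
      | succ k ihk =>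
        intro v
        rw [Function.iterate_succ_apply, Function.iterate_succ_apply, hgc v, ihk (par v)]
    have h0A : c 0 ∉ A := by
      rw [hA]
      intro hmem
      obtain ⟨u, hu, hcu⟩ := Finset.mem_image.1 hmem
      exact (Finset.ne_of_mem_erase hu) (hcinj hcu)
    have hgA : ∀ x ∈ A, gext x ≠ x := by
      intro x hx
      obtain ⟨v, hv, rfl⟩ := Finset.mem_image.1 hx
      rw [hgc v]
      intro heq
      exact hne v (Finset.ne_of_mem_erase hv) (hcinj heq)
    have hescA : ∀ x ∈ A, ∃ k, gext^[k] x ∉ A := by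
      intro x hx
      obtain ⟨v, hv, rfl⟩ := Finset.mem_image.1 hx
      obtain ⟨k, hk⟩ := hac v
      refine ⟨k, ?_⟩
      rw [hiter k v, hk]
      exact h0A
    have hAcard : A.card = r - 1 := by
      rw [hA, Finset.card_image_of_injOn (Set.InjOn.mono (Set.subset_univ _) hcinj.injOn),
        Finset.card_erase_of_mem (Finset.mem_univ _), Finset.card_univ, Fintype.card_fin]
    have hPA : ∀ γ, ∏ v ∈ Finset.univ.erase (0 : Fin r), ind (pairE n γ (c v) (c (par v)))
        = ∏ x ∈ A, ind (pairE n γ x (gext x)) := by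
      intro γ
      rw [hA, Finset.prod_image (fun v _ u _ h => hcinj h)]
      apply Finset.prod_congr rfl
      intro v _
      rw [hgc v]
    have hgb := gamma_bound n K hn hKn' gext A hgA hescA
    rw [← hlam, hAcard] at hgb
    calc ∑ γ ∈ Gam n K, ∑ β : Sym2 (Fin n) → Bool,
          (∏ e : Sym2 (Fin n), if β e then p else 1 - p)
            * ∏ v ∈ Finset.univ.erase (0 : Fin r), ind (adjHG n γ β (c v) (c (par v)))
        = ∑ γ ∈ Gam n K,
            (∏ x ∈ A, ind (pairE n γ x (gext x))) * p ^ (r - 1) := by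
          apply Finset.sum_congr rfl
          intro γ _
          rw [hβint γ, hPA γ]
      _ = (∑ γ ∈ Gam n K, ∏ x ∈ A, ind (pairE n γ x (gext x))) * p ^ (r - 1) := by
          rw [Finset.sum_mul]
      _ ≤ (lam ^ (r - 1) * ((Gam n K).card : ℝ)) * p ^ (r - 1) := by
          apply mul_le_mul_of_nonneg_right hgb (pow_nonneg hp0.le _)
      _ = p ^ (r - 1) * (lam ^ (r - 1) * ((Gam n K).card : ℝ)) := by ring
  -- assemble everything
  unfold probHG
  rw [validGammas_eq]
  rw [div_le_iff₀ hΓR]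
  have hmain : ∑ γ ∈ Gam n K, ∑ β : Sym2 (Fin n) → Bool,
      (∏ e : Sym2 (Fin n), if β e then p else 1 - p)
        * ind ((SimpleGraph.fromRel (fun i j : Fin r =>
            adjHG n γ β (c i) (c j))).Connected)
      ≤ ∑ par ∈ Pars r, ∑ γ ∈ Gam n K, ∑ β : Sym2 (Fin n) → Bool,
          (∏ e : Sym2 (Fin n), if β e then p else 1 - p)
            * ∏ v ∈ Finset.univ.erase (0 : Fin r), ind (adjHG n γ β (c v) (c (par v))) := by
    have step1 : ∑ γ ∈ Gam n K, ∑ β : Sym2 (Fin n) → Bool,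
        (∏ e : Sym2 (Fin n), if β e then p else 1 - p)
          * ind ((SimpleGraph.fromRel (fun i j : Fin r =>
              adjHG n γ β (c i) (c j))).Connected)
        ≤ ∑ γ ∈ Gam n K, ∑ β : Sym2 (Fin n) → Bool,
            (∏ e : Sym2 (Fin n), if β e then p else 1 - p)
              * ∑ par ∈ Pars r, ∏ v ∈ Finset.univ.erase (0 : Fin r),
                  ind (adjHG n γ β (c v) (c (par v))) := by
      apply Finset.sum_le_sum
      intro γ _
      apply Finset.sum_le_sum
      intro β _
      exact mul_le_mul_of_nonneg_left (hub γ β) (hWnonneg β)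
    refine step1.trans (le_of_eq ?_)
    rw [Finset.sum_congr rfl (fun γ _ => Finset.sum_congr rfl (fun β _ => Finset.mul_sum _ _ _))]
    rw [Finset.sum_congr rfl (fun γ _ => Finset.sum_comm)]
    exact Finset.sum_comm
  have hsum2 : ∑ par ∈ Pars r, ∑ γ ∈ Gam n K, ∑ β : Sym2 (Fin n) → Bool,
      (∏ e : Sym2 (Fin n), if β e then p else 1 - p)
        * ∏ v ∈ Finset.univ.erase (0 : Fin r), ind (adjHG n γ β (c v) (c (par v)))
      ≤ ∑ _par ∈ Pars r, p ^ (r - 1) * (lam ^ (r - 1) * ((Gam n K).card : ℝ)) :=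
    Finset.sum_le_sum hparb
  have hlast : ∑ _par ∈ Pars r, p ^ (r - 1) * (lam ^ (r - 1) * ((Gam n K).card : ℝ))
      ≤ (r : ℝ) ^ (r - 2) * (p * lam) ^ (r - 1) * ((Gam n K).card : ℝ) := by
    rw [Finset.sum_const, nsmul_eq_mul]
    have hPc : ((Pars r).card : ℝ) ≤ (r : ℝ) ^ (r - 2) := by
      have := Pars_card_le r hr2
      exact_mod_cast this
    have hnn : (0:ℝ) ≤ p ^ (r - 1) * lam ^ (r - 1) * ((Gam n K).card : ℝ) :=
      mul_nonneg (mul_nonneg (pow_nonneg hp0.le _) (pow_nonneg hlam0 _)) hΓR.le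
    calc ((Pars r).card : ℝ) * (p ^ (r - 1) * (lam ^ (r - 1) * ((Gam n K).card : ℝ)))
        = (p ^ (r - 1) * lam ^ (r - 1) * ((Gam n K).card : ℝ)) * ((Pars r).card : ℝ) := by ring
      _ ≤ (p ^ (r - 1) * lam ^ (r - 1) * ((Gam n K).card : ℝ)) * ((r : ℝ) ^ (r - 2)) :=
          mul_le_mul_of_nonneg_left hPc hnn
      _ = (r : ℝ) ^ (r - 2) * (p * lam) ^ (r - 1) * ((Gam n K).card : ℝ) := by
          rw [mul_pow]; ring
  exact le_trans hmain (le_trans hsum2 hlast)
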